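/- Correctness of the hybrid classical-quantum Walsh–Hadamard algorithm: Let n be a positive integer, N = 2^n, let a : {0,...,N-1} → ℝ, and let ε > 0. Set b_0 = ε + Σ_{m=0}^{N-1} |a_m|; let Ã : {0,...,N-1} → ℝ be given by Ã(0) = b_0 and Ã(m) = a_m for m ≥ 1; let c = ‖Ã‖₂ = √(b_0² + Σ_{m=1}^{N-1} a_m²); let p_k = ((HÃ)_k)² / c² for each k; and let δ = (b_0 − a_0)/√N. Then for every k with 0 ≤ k ≤ N-1, c·√(p_k) − δ = (Ha)_k, i.e., the algorithm's output vector equals the Walsh–Hadamard transform of a. -/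

import Mathlib

/-- `bip n k m = ∑_{i=0}^{n-1} k_i m_i`, the sum of products of binary digits of `k` and `m`. -/
def bip (n k m : ℕ) : ℕ := ∑ i ∈ Finset.range n, (k / 2 ^ i % 2) * (m / 2 ^ i % 2)

/-- The Walsh–Hadamard transform of `v` (of size `N = 2^n`):
`(Hv)_k = (1/√N) ∑_{m=0}^{N-1} (-1)^{⟨k,m⟩} v_m`. -/
noncomputable def wh (n : ℕ) (v : ℕ → ℝ) (k : ℕ) : ℝ :=
  (1 / Real.sqrt (2 ^ n)) * ∑ m ∈ Finset.range (2 ^ n), (-1 : ℝ) ^ (bip n k m) * v m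

lemma bip_zero_right (n k : ℕ) : bip n k 0 = 0 := by
  simp [bip]

lemma wh_split (n : ℕ) (v : ℕ → ℝ) (k : ℕ) :
    wh n v k = (1 / Real.sqrt (2 ^ n)) *
      (v 0 + ∑ m ∈ Finset.Ico 1 (2 ^ n), (-1 : ℝ) ^ (bip n k m) * v m) := by
  unfold wh
  rw [Finset.range_eq_Ico,
    Finset.sum_eq_sum_Ico_succ_bot (by positivity : (0:ℕ) < 2 ^ n)]
  simp [bip_zero_right]

/-- Correctness of the hybrid classical-quantum Walsh–Hadamard algorithm. -/
theorem stmt_4 (n : ℕ) (hn : 0 < n) (a : ℕ → ℝ) (ε : ℝ) (hε : 0 < ε)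
    (b₀ : ℝ) (hb₀ : b₀ = ε + ∑ m ∈ Finset.range (2 ^ n), |a m|)
    (A : ℕ → ℝ) (hA0 : A 0 = b₀) (hA : ∀ m, 1 ≤ m → A m = a m)
    (c : ℝ) (hc : c = Real.sqrt (b₀ ^ 2 + ∑ m ∈ Finset.Ico 1 (2 ^ n), a m ^ 2))
    (p : ℕ → ℝ) (hp : ∀ k, p k = (wh n A k) ^ 2 / c ^ 2)
    (δ : ℝ) (hδ : δ = (b₀ - a 0) / Real.sqrt (2 ^ n)) :
    ∀ k < 2 ^ n, c * Real.sqrt (p k) - δ = wh n a k := by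
  intro k _
  have hsqrtN : (0:ℝ) < Real.sqrt (2 ^ n) := Real.sqrt_pos.mpr (by positivity)
  have habs : (0:ℝ) ≤ ∑ m ∈ Finset.range (2 ^ n), |a m| :=
    Finset.sum_nonneg fun i _ => abs_nonneg _
  have hb₀pos : 0 < b₀ := by rw [hb₀]; linarith
  have hcpos : 0 < c := by
    rw [hc]
    apply Real.sqrt_pos.mpr
    have : (0:ℝ) ≤ ∑ m ∈ Finset.Ico 1 (2 ^ n), a m ^ 2 :=
      Finset.sum_nonneg fun i _ => sq_nonneg _
    nlinarith
  -- the inner sums agree on Ico 1 N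
  have hsum : ∑ m ∈ Finset.Ico 1 (2 ^ n), (-1 : ℝ) ^ (bip n k m) * A m
      = ∑ m ∈ Finset.Ico 1 (2 ^ n), (-1 : ℝ) ^ (bip n k m) * a m := by
    apply Finset.sum_congr rfl
    intro m hm
    rw [hA m (Finset.mem_Ico.mp hm).1]
  have hwhA : wh n A k = wh n a k + δ := by
    rw [wh_split, wh_split, hsum, hA0, hδ]
    field_simp
    ring
  -- positivity of wh n A k
  have hbound : |∑ m ∈ Finset.Ico 1 (2 ^ n), (-1 : ℝ) ^ (bip n k m) * a m|
      ≤ ∑ m ∈ Finset.range (2 ^ n), |a m| := by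
    calc |∑ m ∈ Finset.Ico 1 (2 ^ n), (-1 : ℝ) ^ (bip n k m) * a m|
        ≤ ∑ m ∈ Finset.Ico 1 (2 ^ n), |(-1 : ℝ) ^ (bip n k m) * a m| :=
          Finset.abs_sum_le_sum_abs _ _
      _ = ∑ m ∈ Finset.Ico 1 (2 ^ n), |a m| := by
          apply Finset.sum_congr rfl; intro m _
          rw [abs_mul, abs_pow, abs_neg, abs_one, one_pow, one_mul]
      _ ≤ ∑ m ∈ Finset.range (2 ^ n), |a m| := by
          rw [Finset.range_eq_Ico]
          exact Finset.sum_le_sum_of_subset_of_nonneg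
            (Finset.Ico_subset_Ico (Nat.zero_le _) le_rfl)
            (fun i _ _ => abs_nonneg _)
  have hwhApos : 0 < wh n A k := by
    rw [wh_split, hA0, hsum]
    apply mul_pos (by positivity)
    have := abs_le.mp hbound
    rw [hb₀]
    linarith [this.1]
  have hsq : Real.sqrt (p k) = wh n A k / c := by
    rw [hp k, Real.sqrt_div (sq_nonneg _), Real.sqrt_sq hwhApos.le,
      Real.sqrt_sq hcpos.le]
  rw [hsq, mul_div_cancel₀ _ (ne_of_gt hcpos), hwhA]
  ring
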